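/- For every natural number n ≥ 1, the number of functions f : Fin n → Bool such that no two cyclically consecutive positions are both true (i.e., for all i, not (f i = true and f ((i+1) mod n) = true)) equals the Lucas number L_n = F_{n-1} + F_{n+1}, where F denotes the Fibonacci sequence with F_0 = 0, F_1 = 1. -/

import Mathlib

/-- The refractory relation: not both true. -/
def CRrel (a b : Bool) : Prop := ¬(a = true ∧ b = true)

instance : DecidableRel CRrel := fun a b => by unfold CRrel; infer_instance

/-- Good lists of length `n+1` with head `a` and last `b`. -/
def CRGF : ℕ → Bool → Bool → Finset (List Bool)
  | 0, a, b => if a = b then {[a]} else ∅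
  | (n+1), a, b =>
    if a then (CRGF n false b).image (List.cons true)
    else ((CRGF n false b).image (List.cons false)) ∪ ((CRGF n true b).image (List.cons false))

lemma mem_CRGF : ∀ (n : ℕ) (a b : Bool) (l : List Bool),
    l ∈ CRGF n a b ↔ l.length = n + 1 ∧ List.Chain' CRrel l ∧
      l.head? = some a ∧ l.getLast? = some b := by
  intro n
  induction n with
  | zero =>
    intro a b l
    constructor
    · intro h
      simp only [CRGF] at h
      split at h
      · rename_i hab
        simp only [Finset.mem_singleton] at h
        subst h hab
        simp [List.Chain']
      · simp at h
    · rintro ⟨h1, _, h3, h4⟩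
      obtain ⟨x, rfl⟩ := List.length_eq_one_iff.mp h1
      simp at h3 h4
      subst h3 h4
      simp [CRGF]
  | succ n ih =>
    intro a b l
    constructor
    · intro h
      simp only [CRGF] at h
      have key : ∀ (a' : Bool) (t : List Bool), t ∈ CRGF n a' b → CRrel a a' →
          (a :: t).length = n + 2 ∧ List.Chain' CRrel (a :: t) ∧
          (a :: t).head? = some a ∧ (a :: t).getLast? = some b := by
        intro a' t ht hrel
        obtain ⟨hlen, hch, hhd, hlast⟩ := (ih a' b t).mp ht
        obtain ⟨y, t', rfl⟩ : ∃ y t', t = y :: t' := by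
          cases t with
          | nil => simp at hlen
          | cons y t' => exact ⟨y, t', rfl⟩
        simp at hhd; subst hhd
        refine ⟨by simpa using hlen, ?_, rfl, by simpa using hlast⟩
        exact List.isChain_cons.mpr ⟨by simpa using hrel, hch⟩
      split at h
      · obtain ⟨t, ht, rfl⟩ := Finset.mem_image.mp h
        simp_all only
        exact key false t ht (by simp [CRrel])
      · have ha : a = false := by revert h; cases a <;> simp_all
        subst ha
        rcases Finset.mem_union.mp h with h' | h' <;>
          · obtain ⟨t, ht, rfl⟩ := Finset.mem_image.mp h'
            exact key _ t ht (by simp [CRrel])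
    · rintro ⟨h1, h2, h3, h4⟩
      obtain ⟨x, t, rfl⟩ : ∃ x t, l = x :: t := by
        cases l with
        | nil => simp at h1
        | cons x t => exact ⟨x, t, rfl⟩
      simp at h3; subst h3
      have htlen : t.length = n + 1 := by simpa using h1
      obtain ⟨y, t', rfl⟩ : ∃ y t', t = y :: t' := by
        cases t with
        | nil => simp at htlen
        | cons y t' => exact ⟨y, t', rfl⟩
      rw [List.Chain', List.isChain_cons] at h2
      have hrel : CRrel x y := h2.1 y rfl
      have hmem : (y :: t') ∈ CRGF n y b := by
        rw [ih]
        exact ⟨htlen, h2.2, rfl, by simpa using h4⟩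
      simp only [CRGF]
      cases x with
      | true =>
        have hy : y = false := by
          cases y
          · rfl
          · exact absurd ⟨rfl, rfl⟩ hrel
        subst hy
        simp only [if_pos rfl]
        exact Finset.mem_image.mpr ⟨_, hmem, rfl⟩
      | false =>
        rw [if_neg (by simp)]
        cases y
        · exact Finset.mem_union.mpr (Or.inl (Finset.mem_image.mpr ⟨_, hmem, rfl⟩))
        · exact Finset.mem_union.mpr (Or.inr (Finset.mem_image.mpr ⟨_, hmem, rfl⟩))

lemma CRGF_disjoint {n : ℕ} {a b a' b' : Bool} (h : (a, b) ≠ (a', b')) :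
    Disjoint (CRGF n a b) (CRGF n a' b') := by
  rw [Finset.disjoint_left]
  intro l hl hl'
  rw [mem_CRGF] at hl hl'
  apply h
  obtain ⟨-, -, h1, h2⟩ := hl
  obtain ⟨-, -, h1', h2'⟩ := hl'
  rw [h1, h2] at *
  simp_all

lemma card_CRGF_succ_true (n : ℕ) (b : Bool) :
    (CRGF (n+1) true b).card = (CRGF n false b).card := by
  simp only [CRGF, if_pos rfl]
  exact Finset.card_image_of_injective _ List.cons_injective

lemma card_CRGF_succ_false (n : ℕ) (b : Bool) :
    (CRGF (n+1) false b).card = (CRGF n false b).card + (CRGF n true b).card := by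
  simp only [CRGF]
  rw [if_neg (by simp)]
  rw [Finset.card_union_of_disjoint, Finset.card_image_of_injective _ List.cons_injective,
    Finset.card_image_of_injective _ List.cons_injective]
  rw [Finset.disjoint_left]
  intro l hl hl'
  obtain ⟨t, ht, rfl⟩ := Finset.mem_image.mp hl
  obtain ⟨t', ht', he⟩ := Finset.mem_image.mp hl'
  have : t' = t := List.cons_injective he
  subst this
  exact Finset.disjoint_left.mp (CRGF_disjoint (by simp)) ht' ht

lemma card_CRGF (n : ℕ) :
    (CRGF n false false).card = Nat.fib (n+1) ∧
    (CRGF n false true).card = Nat.fib n ∧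
    (CRGF n true false).card = Nat.fib n ∧
    (CRGF n true true).card = (if n = 0 then 1 else Nat.fib (n-1)) := by
  induction n with
  | zero => simp [CRGF]
  | succ n ih =>
    obtain ⟨h1, h2, h3, h4⟩ := ih
    refine ⟨?_, ?_, ?_, ?_⟩
    · rw [card_CRGF_succ_false, h1, h3]
      rw [Nat.fib_add_two]
      omega
    · rw [card_CRGF_succ_false, h2, h4]
      cases n with
      | zero => simp
      | succ m =>
        rw [if_neg (by omega)]
        simp only [Nat.add_sub_cancel]
        rw [show m + 1 + 1 = m + 2 from rfl, Nat.fib_add_two]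
        omega
    · rw [card_CRGF_succ_true, h1]
    · rw [card_CRGF_succ_true, h2, if_neg (by omega)]
      simp

/-- Good cyclic lists of length `n+1`. -/
def CRCyc (n : ℕ) : Finset (List Bool) :=
  CRGF n false false ∪ CRGF n false true ∪ CRGF n true false

lemma card_CRCyc (n : ℕ) : (CRCyc n).card = Nat.fib (n+1) + Nat.fib n + Nat.fib n := by
  obtain ⟨h1, h2, h3, -⟩ := card_CRGF n
  unfold CRCyc
  rw [Finset.card_union_of_disjoint, Finset.card_union_of_disjoint (CRGF_disjoint (by simp)),
    h1, h2, h3]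
  exact Finset.disjoint_union_left.mpr ⟨CRGF_disjoint (by simp), CRGF_disjoint (by simp)⟩

lemma mem_CRCyc (n : ℕ) (l : List Bool) :
    l ∈ CRCyc n ↔ l.length = n + 1 ∧ List.Chain' CRrel l ∧
      ¬(l.head? = some true ∧ l.getLast? = some true) := by
  constructor
  · intro h
    rcases Finset.mem_union.mp h with h' | h'
    · rcases Finset.mem_union.mp h' with h'' | h'' <;>
      · obtain ⟨hl, hc, hh, hg⟩ := (mem_CRGF _ _ _ _).mp h''
        exact ⟨hl, hc, by simp [hh, hg]⟩
    · obtain ⟨hl, hc, hh, hg⟩ := (mem_CRGF _ _ _ _).mp h'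
      exact ⟨hl, hc, by simp [hh, hg]⟩
  · rintro ⟨h1, h2, h3⟩
    obtain ⟨x, t, rfl⟩ : ∃ x t, l = x :: t := by
      cases l with
      | nil => simp at h1
      | cons x t => exact ⟨x, t, rfl⟩
    obtain ⟨g, hg⟩ : ∃ g, (x :: t).getLast? = some g :=
      Option.isSome_iff_exists.mp (List.getLast?_isSome.mpr (by simp))
    have hmem : ∀ (a b : Bool), x = a → g = b → (x :: t) ∈ CRGF n a b := by
      rintro a b rfl rfl
      exact (mem_CRGF _ _ _ _).mpr ⟨h1, h2, rfl, hg⟩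
    cases x with
    | false =>
      cases g with
      | false => exact Finset.mem_union.mpr (Or.inl (Finset.mem_union.mpr
          (Or.inl (hmem _ _ rfl rfl))))
      | true => exact Finset.mem_union.mpr (Or.inl (Finset.mem_union.mpr
          (Or.inr (hmem _ _ rfl rfl))))
    | true =>
      cases g with
      | false => exact Finset.mem_union.mpr (Or.inr (hmem _ _ rfl rfl))
      | true => exact absurd ⟨rfl, hg⟩ h3

lemma head?_ofFn (m : ℕ) (f : Fin (m+1) → Bool) : (List.ofFn f).head? = some (f 0) := by
  rw [List.ofFn_succ]; rfl

lemma getLast?_ofFn (m : ℕ) (f : Fin (m+1) → Bool) :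
    (List.ofFn f).getLast? = some (f ⟨m, by omega⟩) := by
  rw [List.getLast?_eq_getElem?, List.length_ofFn, Nat.add_sub_cancel, List.getElem?_ofFn]
  simp [List.ofFnNthVal]

lemma key_iff (m : ℕ) (f : Fin (m+1) → Bool) :
    (∀ i : Fin (m+1),
      ¬(f i = true ∧ f ⟨((i : ℕ) + 1) % (m+1), Nat.mod_lt _ (Nat.succ_pos m)⟩ = true))
      ↔ List.ofFn f ∈ CRCyc m := by
  rw [mem_CRCyc, head?_ofFn, getLast?_ofFn]
  constructor
  · intro hp
    refine ⟨by simp, ?_, ?_⟩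
    · rw [List.Chain', List.isChain_iff_getElem]
      intro i hi
      rw [List.length_ofFn] at hi
      rw [List.getElem_ofFn, List.getElem_ofFn]
      have h2 := hp ⟨i, by omega⟩
      have hm : ((i + 1) % (m + 1)) = i + 1 := Nat.mod_eq_of_lt (by omega)
      simp only [hm] at h2
      rintro ⟨ha, hb⟩
      exact h2 ⟨ha, hb⟩
    · have h3 := hp ⟨m, by omega⟩
      have hm : ((m + 1) % (m + 1)) = 0 := Nat.mod_self _
      simp only [hm] at h3
      rintro ⟨ha, hb⟩
      simp only [Option.some_inj] at ha hb
      refine h3 ⟨hb, ?_⟩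
      rw [show (⟨0, by omega⟩ : Fin (m+1)) = 0 from Fin.ext rfl]
      exact ha
  · rintro ⟨-, hc, hw⟩ i ⟨ha, hb⟩
    rcases Nat.lt_or_ge (i : ℕ) m with hlt | hge
    · rw [List.Chain', List.isChain_iff_getElem] at hc
      have h2 := hc (i : ℕ) (by simp only [List.length_ofFn]; omega)
      rw [List.getElem_ofFn, List.getElem_ofFn] at h2
      apply h2
      constructor
      · exact ha
      · rw [show (⟨(i : ℕ) + 1, by omega⟩ : Fin (m+1))
            = ⟨((i : ℕ) + 1) % (m+1), Nat.mod_lt _ (Nat.succ_pos m)⟩ from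
            Fin.ext (by simp [Nat.mod_eq_of_lt (by omega : (i : ℕ) + 1 < m + 1)])]
        exact hb
    · have him : (i : ℕ) = m := by omega
      apply hw
      constructor
      · simp only [Option.some_inj]
        rw [show (0 : Fin (m+1)) = ⟨((i : ℕ) + 1) % (m+1), Nat.mod_lt _ (Nat.succ_pos m)⟩ from
          Fin.ext (by simp [him])]
        exact hb
      · simp only [Option.some_inj]
        rw [show (⟨m, by omega⟩ : Fin (m+1)) = i from Fin.ext (by simp [him])]
        exact ha

/-- For `n ≥ 1`, the number of binary strings of length `n` with no two
cyclically consecutive `true`s equals the Lucas number `L n = F (n-1) + F (n+1)`. -/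
theorem count_cyclic_refractory_eq_lucas (n : ℕ) (hn : 1 ≤ n) :
    Fintype.card {f : Fin n → Bool //
      ∀ i : Fin n,
        ¬(f i = true ∧ f ⟨((i : ℕ) + 1) % n, Nat.mod_lt _ (by omega)⟩ = true)} =
    Nat.fib (n - 1) + Nat.fib (n + 1) := by
  obtain ⟨m, rfl⟩ : ∃ m, n = m + 1 := ⟨n - 1, by omega⟩
  rw [Fintype.card_subtype]
  rw [Finset.card_bij (t := CRCyc m) (fun f _ => List.ofFn f) ?h1 ?h2 ?h3]
  · rw [card_CRCyc]
    simp only [Nat.add_sub_cancel]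
    rw [show m + 1 + 1 = m + 2 from rfl, Nat.fib_add_two]
    omega
  case h1 =>
    intro f hf
    exact (key_iff m f).mp (Finset.mem_filter.mp hf).2
  case h2 =>
    intro f1 _ f2 _ h
    exact List.ofFn_injective h
  case h3 =>
    intro l hl
    have hlen : l.length = m + 1 := ((mem_CRCyc m l).mp hl).1
    refine ⟨fun i => l.get ⟨(i : ℕ), by rw [hlen]; exact i.isLt⟩, ?_, ?_⟩
    · have hofn : List.ofFn (fun i : Fin (m+1) =>
          l.get ⟨(i : ℕ), by rw [hlen]; exact i.isLt⟩) = l := by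
        apply List.ext_get (by simp [hlen])
        intro k h1 h2
        rw [List.get_ofFn]
        rfl
      exact Finset.mem_filter.mpr ⟨Finset.mem_univ _, (key_iff m _).mpr (by rw [hofn]; exact hl)⟩
    · apply List.ext_get (by simp [hlen])
      intro k h1 h2
      rw [List.get_ofFn]
      rfl
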